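/- Suppose a vehicle route R = (v₁,...,vₙ) with n ≥ 3 is traversed at constant speed ν > 0, where Δ(i) is the cumulative distance from v₁ to vᵢ, S_{ij} is the cumulative service time from vᵢ through v_{j-1}, each node vᵢ has time window [e_{vᵢ}, l_{vᵢ}], and the vehicle may wait at nodes (departing node vᵢ no earlier than max(arrival time, e_{vᵢ}) plus service time). Then there exists a feasible schedule at speed ν respecting all time windows if and only if for every pair i < j: (Δ(j) − Δ(i))/ν + S_{ij} ≤ l_{vⱼ} − e_{vᵢ}. -/

import Mathlib

theorem feasible_schedule_iff_pairwise_speed_condition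
    (n : ℕ) (hn : 3 ≤ n) (ν : ℝ) (hν : 0 < ν)
    (d s e l : ℕ → ℝ)
    (hd : ∀ i, 0 ≤ d i) (hs : ∀ i, 0 ≤ s i) (hel : ∀ i, e i ≤ l i)
    (Δ : ℕ → ℝ) (hΔ : ∀ i, Δ i = ∑ m ∈ Finset.range i, d m)
    (S : ℕ → ℕ → ℝ) (hS : ∀ i j, S i j = ∑ k ∈ Finset.Ico i j, s k) :
    (∃ t : ℕ → ℝ, (∀ i < n, e i ≤ t i ∧ t i ≤ l i) ∧
        ∀ i, i + 1 < n → t i + s i + d i / ν ≤ t (i + 1)) ↔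
    (∀ i j, i < j → j < n → (Δ j - Δ i) / ν + S i j ≤ l j - e i) := by
  have hΔstep : ∀ j, Δ (j + 1) = Δ j + d j := by
    intro j; rw [hΔ, hΔ, Finset.sum_range_succ]
  have hSstep : ∀ i j, i ≤ j → S i (j + 1) = S i j + s j := by
    intro i j hij
    rw [hS, hS, Finset.sum_Ico_succ_top hij]
  constructor
  · rintro ⟨t, ht1, ht2⟩ i j hij hjn
    have key : ∀ k, i + k < n → t i + (Δ (i + k) - Δ i) / ν + S i (i + k) ≤ t (i + k) := by
      intro k
      induction k with
      | zero => intro _; simp [hS]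
      | succ k ih =>
        intro hk
        have h1 := ih (by omega)
        have h2 := ht2 (i + k) (by omega)
        have e1 : Δ (i + (k + 1)) = Δ (i + k) + d (i + k) := by
          rw [show i + (k + 1) = (i + k) + 1 by omega, hΔstep]
        have e2 : S i (i + (k + 1)) = S i (i + k) + s (i + k) := by
          rw [show i + (k + 1) = (i + k) + 1 by omega, hSstep i (i + k) (by omega)]
        have hdiv : (Δ (i + k) + d (i + k) - Δ i) / ν
            = (Δ (i + k) - Δ i) / ν + d (i + k) / ν := by ring
        rw [show i + (k + 1) = (i + k) + 1 by omega] at *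
        rw [e1, e2, hdiv]
        linarith
    obtain ⟨k, rfl⟩ : ∃ k, j = i + k := ⟨j - i, by omega⟩
    have h3 := key k hjn
    have hi := (ht1 i (by omega)).1
    have hj := (ht1 (i + k) hjn).2
    linarith
  · intro h
    refine ⟨fun j => (Finset.range (j + 1)).sup' (by simp)
        (fun i => e i + (Δ j - Δ i) / ν + S i j), ?_, ?_⟩
    · intro j hjn
      constructor
      · have : e j + (Δ j - Δ j) / ν + S j j ≤ _ :=
          Finset.le_sup' (fun i => e i + (Δ j - Δ i) / ν + S i j)
            (Finset.self_mem_range_succ j)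
        simpa [hS, -Finset.le_sup'_iff] using this
      · apply Finset.sup'_le
        intro i hi
        rw [Finset.mem_range] at hi
        rcases Nat.lt_or_ge i j with hij | hij
        · have := h i j hij hjn
          linarith
        · have hij' : i = j := by omega
          subst hij'
          simp [hS, hel i]
    · intro j hjn
      set T := (Finset.range (j + 2)).sup' (by simp)
        (fun i => e i + (Δ (j + 1) - Δ i) / ν + S i (j + 1)) with hT
      have step : (Finset.range (j + 1)).sup'
          (by simp) (fun i => e i + (Δ j - Δ i) / ν + S i j)
          ≤ T - s j - d j / ν := by
        apply Finset.sup'_le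
        intro i hi
        rw [Finset.mem_range] at hi
        have hij : i ≤ j := by omega
        have hle : e i + (Δ (j + 1) - Δ i) / ν + S i (j + 1) ≤ T := by
          rw [hT]
          exact Finset.le_sup' (fun i => e i + (Δ (j + 1) - Δ i) / ν + S i (j + 1))
            (Finset.mem_range.mpr (by omega))
        have e1 := hΔstep j
        have e2 := hSstep i j hij
        have hdiv : (Δ j + d j - Δ i) / ν = (Δ j - Δ i) / ν + d j / ν := by ring
        rw [e1, e2, hdiv] at hle
        linarith
      linarith
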